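/- arXiv:1702.05365 — 6 statements merged into one kernel-verified Lean document; each statement's English description precedes it below -/
import Mathlib

section
/- The polynomial l1(z,w) = z + (i b/12) z^2 + (i b/6) z w + (i b/12) w^2 is a Darboux factor with cofactor k1 = 1 - (i b/6) z - (i b/6) w for the complex system ż = z + (1/72)(-18 i b z² + 18 i b w² + b² z³ + 3 b² z² w + 3 b² z w² + b² w³), ẇ = -w + (1/72)(18 i b z² - 18 i b w² - b² z³ - 3 b² z² w - 3 b² z w² - b² w³); that is, (∂l1/∂z)·ż + (∂l1/∂w)·ẇ = k1 · l1 identically as polynomials in z, w over ℂ. -/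
open Complex

/-- The polynomial `l1` is a Darboux factor with cofactor `k1` for the complex system. -/
theorem stmt0 (b z w : ℂ) :
    deriv (fun z' : ℂ => z' + (I*b/12)*z'^2 + (I*b/6)*z'*w + (I*b/12)*w^2) z *
      (z + (1/72)*(-18*I*b*z^2 + 18*I*b*w^2 + b^2*z^3 + 3*b^2*z^2*w + 3*b^2*z*w^2 + b^2*w^3)) +
    deriv (fun w' : ℂ => z + (I*b/12)*z^2 + (I*b/6)*z*w' + (I*b/12)*w'^2) w *
      (-w + (1/72)*(18*I*b*z^2 - 18*I*b*w^2 - b^2*z^3 - 3*b^2*z^2*w - 3*b^2*z*w^2 - b^2*w^3)) =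
    (1 - (I*b/6)*z - (I*b/6)*w) *
      (z + (I*b/12)*z^2 + (I*b/6)*z*w + (I*b/12)*w^2) := by
  have e1 : (fun z' : ℂ => z' + (I*b/12)*z'^2 + (I*b/6)*z'*w + (I*b/12)*w^2)
      = fun x : ℂ => (x + (I*b/12)*x^2 + (I*b/6)*(x*w)) + (I*b/12)*w^2 := by
    funext x; ring
  have e2 : (fun w' : ℂ => z + (I*b/12)*z^2 + (I*b/6)*z*w' + (I*b/12)*w'^2)
      = fun x : ℂ => (z + (I*b/12)*z^2) + ((I*b/6)*z*x + (I*b/12)*x^2) := by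
    funext x; ring
  have h1 : deriv (fun z' : ℂ => z' + (I*b/12)*z'^2 + (I*b/6)*z'*w + (I*b/12)*w^2) z
      = 1 + (I*b/12)*(2*z) + (I*b/6)*w := by
    rw [e1]
    exact ((((hasDerivAt_id z).add (((hasDerivAt_pow 2 z).const_mul (I*b/12)))).add
      (((hasDerivAt_id z).mul_const w).const_mul (I*b/6))).add_const ((I*b/12)*w^2)).deriv.trans
      (by simp)
  have h2 : deriv (fun w' : ℂ => z + (I*b/12)*z^2 + (I*b/6)*z*w' + (I*b/12)*w'^2) w
      = (I*b/6)*z + (I*b/12)*(2*w) := by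
    rw [e2]
    exact (((((hasDerivAt_id w).const_mul ((I*b/6)*z)).add
      ((hasDerivAt_pow 2 w).const_mul (I*b/12))).const_add (z + (I*b/12)*z^2)).deriv).trans
      (by simp)
  rw [h1, h2]
  have hI : I^2 = -1 := I_sq
  linear_combination (b^2*z^3/72 + b^2*z^2*w/24 + b^2*z*w^2/24 + b^2*w^3/72) * hI
end

section
/- The polynomial l3(z,w) = 1 - (i b/6) z + (b²/36) z² + (i b/6) w + (b²/18) z w + (b²/36) w² is a Darboux factor with cofactor k3 = -(i b/6) z - (i b/6) w for the system ż = z + (1/72)(-18 i b z² + 18 i b w² + b² z³ + 3 b² z² w + 3 b² z w² + b² w³), ẇ = -w + (1/72)(18 i b z² - 18 i b w² - b² z³ - 3 b² z² w - 3 b² z w² - b² w³), i.e. (∂l3/∂z)·ż + (∂l3/∂w)·ẇ = k3 · l3 as polynomials over ℂ. -/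
open Complex

/-- The polynomial `l3` is a Darboux factor with cofactor `k3` for the complex system. -/
theorem stmt1 (b z w : ℂ) :
    deriv (fun z' : ℂ => 1 - (I*b/6)*z' + (b^2/36)*z'^2 + (I*b/6)*w + (b^2/18)*z'*w + (b^2/36)*w^2) z *
      (z + (1/72)*(-18*I*b*z^2 + 18*I*b*w^2 + b^2*z^3 + 3*b^2*z^2*w + 3*b^2*z*w^2 + b^2*w^3)) +
    deriv (fun w' : ℂ => 1 - (I*b/6)*z + (b^2/36)*z^2 + (I*b/6)*w' + (b^2/18)*z*w' + (b^2/36)*w'^2) w *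
      (-w + (1/72)*(18*I*b*z^2 - 18*I*b*w^2 - b^2*z^3 - 3*b^2*z^2*w - 3*b^2*z*w^2 - b^2*w^3)) =
    (-(I*b/6)*z - (I*b/6)*w) *
      (1 - (I*b/6)*z + (b^2/36)*z^2 + (I*b/6)*w + (b^2/18)*z*w + (b^2/36)*w^2) := by
  have h1 : deriv (fun z' : ℂ => 1 - (I*b/6)*z' + (b^2/36)*z'^2 + (I*b/6)*w + (b^2/18)*z'*w + (b^2/36)*w^2) z
      = -(I*b/6) + (b^2/36)*(2*z) + (b^2/18)*w := by
    have : HasDerivAt (fun z' : ℂ => 1 - (I*b/6)*z' + (b^2/36)*z'^2 + (I*b/6)*w + (b^2/18)*z'*w + (b^2/36)*w^2)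
        (-(I*b/6) + (b^2/36)*(2*z) + (b^2/18)*w) z := by
      have h := (((((hasDerivAt_const z (1:ℂ)).sub ((hasDerivAt_id z).const_mul (I*b/6))).add
        (((hasDerivAt_id z).pow 2).const_mul (b^2/36))).add (hasDerivAt_const z ((I*b/6)*w))).add
        (((hasDerivAt_id z).mul_const w).const_mul (b^2/18))).add (hasDerivAt_const z ((b^2/36)*w^2))
      convert h using 1
      · rfl
      · rfl
      · funext x; simp only [id_eq, Pi.add_apply, Pi.sub_apply, Pi.pow_apply]; ring
      · simp only [id_eq]; ring
    exact this.deriv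
  have h2 : deriv (fun w' : ℂ => 1 - (I*b/6)*z + (b^2/36)*z^2 + (I*b/6)*w' + (b^2/18)*z*w' + (b^2/36)*w'^2) w
      = (I*b/6) + (b^2/18)*z + (b^2/36)*(2*w) := by
    have : HasDerivAt (fun w' : ℂ => 1 - (I*b/6)*z + (b^2/36)*z^2 + (I*b/6)*w' + (b^2/18)*z*w' + (b^2/36)*w'^2)
        ((I*b/6) + (b^2/18)*z + (b^2/36)*(2*w)) w := by
      have h := (((hasDerivAt_const w (1 - (I*b/6)*z + (b^2/36)*z^2)).add
        ((hasDerivAt_id w).const_mul (I*b/6))).add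
        ((hasDerivAt_id w).const_mul ((b^2/18)*z))).add
        (((hasDerivAt_id w).pow 2).const_mul (b^2/36))
      convert h using 1
      · rfl
      · rfl
      · funext x; simp only [id_eq, Pi.add_apply, Pi.pow_apply]
      simp only [id_eq, pow_one]; push_cast; ring
    exact this.deriv
  rw [h1, h2]
  have hI : I^2 = -1 := I_sq
  linear_combination (b^2*z^2/18 - b^2*w^2/18) * hI
end

section
/- For every b ∈ ℂ, the polynomial l4(z,w) = 1 - (c/3) z + (c²/18) z² - (c/3) w - (c²/9) z w + (c²/18) w² is a Darboux factor (i.e. there exists a polynomial cofactor K with ∂l4/∂z · P + ∂l4/∂w · Q = K · l4) of the system P(z,w) = z + (1/36)(-9c z² + 18c z w - 9c w² - 2c² z³ + 6c² z² w - 6c² z w² + 2c² w³), Q(z,w) = -w + (1/36)(9c z² - 18c z w + 9c w² - 2c² z³ + 6c² z² w - 6c² z w² + 2c² w³). -/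
open Complex

/-- For every `c ∈ ℂ`, the polynomial `l4` is a Darboux factor of the system (P,Q). -/
theorem stmt4 (c : ℂ) :
    ∃ K : MvPolynomial (Fin 2) ℂ, ∀ z w : ℂ,
      deriv (fun z' : ℂ => 1 - (c/3)*z' + (c^2/18)*z'^2 - (c/3)*w - (c^2/9)*z'*w + (c^2/18)*w^2) z *
        (z + (1/36)*(-9*c*z^2 + 18*c*z*w - 9*c*w^2 - 2*c^2*z^3 + 6*c^2*z^2*w
          - 6*c^2*z*w^2 + 2*c^2*w^3)) +
      deriv (fun w' : ℂ => 1 - (c/3)*z + (c^2/18)*z^2 - (c/3)*w' - (c^2/9)*z*w' + (c^2/18)*w'^2) w *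
        (-w + (1/36)*(9*c*z^2 - 18*c*z*w + 9*c*w^2 - 2*c^2*z^3 + 6*c^2*z^2*w
          - 6*c^2*z*w^2 + 2*c^2*w^3)) =
      (MvPolynomial.eval (fun i : Fin 2 => if i = 0 then z else w) K) *
        (1 - (c/3)*z + (c^2/18)*z^2 - (c/3)*w - (c^2/9)*z*w + (c^2/18)*w^2) := by
  refine ⟨MvPolynomial.C (-(c/3)) * MvPolynomial.X 0 + MvPolynomial.C (c/3) * MvPolynomial.X 1, fun z w => ?_⟩
  have h1 : deriv (fun z' : ℂ => 1 - (c/3)*z' + (c^2/18)*z'^2 - (c/3)*w - (c^2/9)*z'*w + (c^2/18)*w^2) z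
      = -(c/3) + (c^2/18)*(2*z) - (c^2/9)*w := by
    have : HasDerivAt (fun z' : ℂ => 1 - (c/3)*z' + (c^2/18)*z'^2 - (c/3)*w - (c^2/9)*z'*w + (c^2/18)*w^2)
        (-(c/3) + (c^2/18)*(2*z) - (c^2/9)*w) z := by
      have hid := hasDerivAt_id z
      have h2 : HasDerivAt (fun z' : ℂ => z'^2) (2*z) z := by
        simpa using hasDerivAt_pow 2 z
      have := ((((hasDerivAt_const z (1:ℂ)).sub (hid.const_mul (c/3))).add
        (h2.const_mul (c^2/18))).sub (hasDerivAt_const z ((c/3)*w))).sub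
        ((hid.mul_const w).const_mul (c^2/9)) |>.add (hasDerivAt_const z ((c^2/18)*w^2))
      convert this using 1
      all_goals first
        | (funext x; simp only [id, Pi.add_apply, Pi.sub_apply]; ring)
        | ring
        | rfl
    rw [this.deriv]
  have h2 : deriv (fun w' : ℂ => 1 - (c/3)*z + (c^2/18)*z^2 - (c/3)*w' - (c^2/9)*z*w' + (c^2/18)*w'^2) w
      = -(c/3) - (c^2/9)*z + (c^2/18)*(2*w) := by
    have : HasDerivAt (fun w' : ℂ => 1 - (c/3)*z + (c^2/18)*z^2 - (c/3)*w' - (c^2/9)*z*w' + (c^2/18)*w'^2)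
        (-(c/3) - (c^2/9)*z + (c^2/18)*(2*w)) w := by
      have hid := hasDerivAt_id w
      have hp : HasDerivAt (fun w' : ℂ => w'^2) (2*w) w := by
        simpa using hasDerivAt_pow 2 w
      have := ((((hasDerivAt_const w (1 - (c/3)*z + (c^2/18)*z^2 : ℂ)).sub
        (hid.const_mul (c/3))).sub (hid.const_mul ((c^2/9)*z))).add
        (hp.const_mul (c^2/18)))
      convert this using 1
      all_goals first
        | (funext x; simp only [id, Pi.add_apply, Pi.sub_apply] <;> ring)
        | ring
        | rfl
    rw [this.deriv]
  rw [h1, h2]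
  simp only [MvPolynomial.eval_add, MvPolynomial.eval_mul, MvPolynomial.eval_C, MvPolynomial.eval_X]
  norm_num [Fin.ext_iff]
  ring
end

section
/- The polynomial l1(z,w) = z + (3b/16) z² + (b/8) z w + (b/48) w² is a Darboux factor of the system P(z,w) = z + (1/16)(21b z² - 6b z w + b w²), Q(z,w) = -w + (1/16)(-27b z² + 18b z w - 7b w²); that is, there exists a polynomial cofactor K(z,w) with ∂l1/∂z · P + ∂l1/∂w · Q = K · l1 identically over ℂ. -/
open Complex

/-- `l1 = z + (3b/16)z² + (b/8)zw + (b/48)w²` is a Darboux factor of the system (P,Q). -/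
theorem stmt5 (b : ℂ) :
    ∃ K : MvPolynomial (Fin 2) ℂ, ∀ z w : ℂ,
      deriv (fun z' : ℂ => z' + (3*b/16)*z'^2 + (b/8)*z'*w + (b/48)*w^2) z *
        (z + (1/16)*(21*b*z^2 - 6*b*z*w + b*w^2)) +
      deriv (fun w' : ℂ => z + (3*b/16)*z^2 + (b/8)*z*w' + (b/48)*w'^2) w *
        (-w + (1/16)*(-27*b*z^2 + 18*b*z*w - 7*b*w^2)) =
      (MvPolynomial.eval (fun i : Fin 2 => if i = 0 then z else w) K) *
        (z + (3*b/16)*z^2 + (b/8)*z*w + (b/48)*w^2) := by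
  use MvPolynomial.C 1 + MvPolynomial.C (3*b/2) * MvPolynomial.X 0
      + MvPolynomial.C (-b/2) * MvPolynomial.X 1
  intro z w
  have h1 : deriv (fun z' : ℂ => z' + (3*b/16)*z'^2 + (b/8)*z'*w + (b/48)*w^2) z
      = 1 + (3*b/16)*(2*z) + (b/8)*w := by
    have : HasDerivAt (fun z' : ℂ => z' + (3*b/16)*z'^2 + (b/8)*z'*w + (b/48)*w^2)
        (1 + (3*b/16)*(2*z) + (b/8)*w) z := by
      have := (((hasDerivAt_id z).add
        (((hasDerivAt_pow 2 z).const_mul (3*b/16)))).add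
        ((hasDerivAt_id z).const_mul (b/8) |>.mul_const w)).add_const ((b/48)*w^2)
      exact this.congr_deriv (by norm_num)
    exact this.deriv
  have h2 : deriv (fun w' : ℂ => z + (3*b/16)*z^2 + (b/8)*z*w' + (b/48)*w'^2) w
      = (b/8)*z + (b/48)*(2*w) := by
    have : HasDerivAt (fun w' : ℂ => z + (3*b/16)*z^2 + (b/8)*z*w' + (b/48)*w'^2)
        ((b/8)*z + (b/48)*(2*w)) w := by
      have := (((hasDerivAt_id w).const_mul ((b/8)*z)).add
        ((hasDerivAt_pow 2 w).const_mul (b/48))).const_add (z + (3*b/16)*z^2)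
      have e : (fun w' : ℂ => z + (3*b/16)*z^2 + (b/8)*z*w' + (b/48)*w'^2)
          = fun x => z + 3 * b / 16 * z ^ 2 + (((fun y : ℂ => b / 8 * z * id y) + fun y : ℂ => b / 48 * y ^ 2 : ℂ → ℂ) x) := by
        funext x; simp only [Pi.add_apply, id]; ring
      rw [e]
      refine this.congr_deriv ?_
      norm_num
    exact this.deriv
  rw [h1, h2]
  simp only [map_add, map_mul, MvPolynomial.eval_C, MvPolynomial.eval_X, map_one]
  norm_num
  ring
end

section
/- The polynomial l2(z,w) = w + (9b/16) z² + (3b/8) z w + (b/16) w² is a Darboux factor with some polynomial cofactor of the system P(z,w) = z + (1/16)(21b z² - 6b z w + b w²), Q(z,w) = -w + (1/16)(-27b z² + 18b z w - 7b w²), for every b ∈ ℂ. -/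
open Complex

/-- `l2 = w + (9b/16)z² + (3b/8)zw + (b/16)w²` is a Darboux factor of the system (P,Q),
for every `b ∈ ℂ`. -/
theorem stmt6 (b : ℂ) :
    ∃ K : MvPolynomial (Fin 2) ℂ, ∀ z w : ℂ,
      deriv (fun z' : ℂ => w + (9*b/16)*z'^2 + (3*b/8)*z'*w + (b/16)*w^2) z *
        (z + (1/16)*(21*b*z^2 - 6*b*z*w + b*w^2)) +
      deriv (fun w' : ℂ => w' + (9*b/16)*z^2 + (3*b/8)*z*w' + (b/16)*w'^2) w *
        (-w + (1/16)*(-27*b*z^2 + 18*b*z*w - 7*b*w^2)) =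
      (MvPolynomial.eval (fun i : Fin 2 => if i = 0 then z else w) K) *
        (w + (9*b/16)*z^2 + (3*b/8)*z*w + (b/16)*w^2) := by
  refine ⟨MvPolynomial.C (-1) + MvPolynomial.C (3*b/2) * MvPolynomial.X 0
    + MvPolynomial.C (-(b/2)) * MvPolynomial.X 1, fun z w => ?_⟩
  have h1 : deriv (fun z' : ℂ => w + (9*b/16)*z'^2 + (3*b/8)*z'*w + (b/16)*w^2) z
      = (9*b/16)*(2*z) + (3*b/8)*w := by
    have : HasDerivAt (fun z' : ℂ => w + (9*b/16)*z'^2 + (3*b/8)*z'*w + (b/16)*w^2)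
        ((9*b/16)*(2*z) + (3*b/8)*w) z := by
      have := (((hasDerivAt_pow 2 z).const_mul ((9:ℂ)*b/16)).const_add w).add
        (((hasDerivAt_id z).const_mul ((3:ℂ)*b/8)).mul_const w)
      simpa using (this.add_const ((b/16)*w^2))
    exact this.deriv
  have h2 : deriv (fun w' : ℂ => w' + (9*b/16)*z^2 + (3*b/8)*z*w' + (b/16)*w'^2) w
      = 1 + (3*b/8)*z + (b/16)*(2*w) := by
    have : HasDerivAt (fun w' : ℂ => w' + (9*b/16)*z^2 + (3*b/8)*z*w' + (b/16)*w'^2)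
        (1 + (3*b/8)*z + (b/16)*(2*w)) w := by
      have := (((hasDerivAt_id w).add_const ((9:ℂ)*b/16*z^2)).add
        ((hasDerivAt_id w).const_mul ((3:ℂ)*b/8*z))).add
        ((hasDerivAt_pow 2 w).const_mul ((b:ℂ)/16))
      simpa [mul_assoc, Pi.add_def] using this
    exact this.deriv
  rw [h1, h2]
  simp [MvPolynomial.eval_add, MvPolynomial.eval_mul]
  ring
end

section
/- Let b ∈ ℝ with b ≠ 0 and set a² = (35/94 + (3/94)√721) b² (so that 47a⁴ - 35a²b² - 28b⁴ = 0) and b₃₀ = (10a² + 10b²)/9. Then the third period coefficient p₆ = 136136a⁶ + 38808a⁴b² + 13080a²b⁴ + 165704b⁶ + 58212a⁴b₃₀ - 17496a²b²b₃₀ - 546588b⁴b₃₀ - 2106a²b₃₀² + 341334b²b₃₀² - 15309b₃₀³ is a nonzero multiple of b⁶; specifically p₆ is nonzero (indeed p₆ = (c₀ + c₁√721) b⁶ for some explicit positive rational constants with c₀ + c₁√721 ≠ 0). -/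
/-- With `b ≠ 0`, `a² = (35/94 + (3/94)√721)b²` and `b₃₀ = (10a² + 10b²)/9`,
the third period coefficient `p₆` is a nonzero multiple of `b⁶`:
`p₆ = (c₀ + c₁√721)b⁶` for some positive rationals `c₀, c₁`, and `p₆ ≠ 0`. -/
theorem stmt10 (a b b30 : ℝ) (hb : b ≠ 0)
    (ha : a^2 = (35/94 + (3/94)*Real.sqrt 721)*b^2)
    (h30 : b30 = (10*a^2 + 10*b^2)/9) :
    (∃ c0 c1 : ℚ, 0 < c0 ∧ 0 < c1 ∧
      136136*a^6 + 38808*a^4*b^2 + 13080*a^2*b^4 + 165704*b^6 + 58212*a^4*b30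
        - 17496*a^2*b^2*b30 - 546588*b^4*b30 - 2106*a^2*b30^2 + 341334*b^2*b30^2
        - 15309*b30^3 = ((c0 : ℝ) + (c1 : ℝ)*Real.sqrt 721)*b^6) ∧
    136136*a^6 + 38808*a^4*b^2 + 13080*a^2*b^4 + 165704*b^6 + 58212*a^4*b30
      - 17496*a^2*b^2*b30 - 546588*b^4*b30 - 2106*a^2*b30^2 + 341334*b^2*b30^2
      - 15309*b30^3 ≠ 0 := by
  have ht : Real.sqrt 721 ^ 2 = 721 := Real.sq_sqrt (by norm_num)
  have htpos : (0:ℝ) < Real.sqrt 721 := Real.sqrt_pos.mpr (by norm_num)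
  have key : 136136*a^6 + 38808*a^4*b^2 + 13080*a^2*b^4 + 165704*b^6 + 58212*a^4*b30
      - 17496*a^2*b^2*b30 - 546588*b^4*b30 - 2106*a^2*b30^2 + 341334*b^2*b30^2
      - 15309*b30^3
      = (((57716967168/103823 : ℚ) : ℝ) + ((2296191744/103823 : ℚ) : ℝ)*Real.sqrt 721)*b^6 := by
    subst h30
    rw [show a^6 = (a^2)^3 by ring, show a^4 = (a^2)^2 by ring, ha]
    push_cast
    linear_combination ((67172616/103823 + 598104/103823 * Real.sqrt 721) * b^6) * ht
  refine ⟨⟨57716967168/103823, 2296191744/103823, by norm_num, by norm_num, key⟩, ?_⟩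
  rw [key]
  refine mul_ne_zero (ne_of_gt ?_) (pow_ne_zero _ hb)
  have : (0:ℝ) < ((57716967168/103823 : ℚ) : ℝ) := by norm_num
  positivity
end
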